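/- Let D ⊆ ℂ be open and g₁, g₂ : D → ℂ holomorphic with g₁′ and g₂′ nonvanishing on D. Define K = (−8|g₁′g₂′|/((|g₁|²+1)(|g₂|²+1)))·(|g₁′|²/(|g₁|²+1)² + |g₂′|²/(|g₂|²+1)²) and κ = (8|g₁′g₂′|/((|g₁|²+1)(|g₂|²+1)))·(|g₁′|²/(|g₁|²+1)² − |g₂′|²/(|g₂|²+1)²). Then K < 0, K² − κ² > 0, and the pair (K, κ) satisfies the system of natural PDE's of minimal surfaces of general type in ℝ⁴ on D: (K² − κ²)^{1/4}·Δ ln|κ − K| = 2(2K − κ) and (K² − κ²)^{1/4}·Δ ln|κ + K| = 2(2K + κ), where Δ is the Laplace operator in the two real coordinates of D ⊆ ℂ ≅ ℝ². -/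

import Mathlib

open Complex

/-- The Laplace operator `ΔF = F_uu + F_vv` for a function on `ℂ ≅ ℝ²`,
where the two real directions are `1` and `i`. -/
noncomputable def lap (F : ℂ → ℝ) (t : ℂ) : ℝ :=
  fderiv ℝ (fun z => fderiv ℝ F z 1) t 1 +
  fderiv ℝ (fun z => fderiv ℝ F z Complex.I) t Complex.I

/-- A structured witness that `lap F t = a`. -/
def HasLapAt (F : ℂ → ℝ) (t : ℂ) (a : ℝ) : Prop :=
  ∃ G : ℂ → (ℂ →L[ℝ] ℝ), (∀ᶠ z in nhds t, HasFDerivAt F (G z) z) ∧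
    ∃ L1 LI : ℂ →L[ℝ] ℝ, HasFDerivAt (fun z => G z 1) L1 t ∧
      HasFDerivAt (fun z => G z Complex.I) LI t ∧ L1 1 + LI Complex.I = a

theorem HasLapAt.lap_eq {F : ℂ → ℝ} {t : ℂ} {a : ℝ} (h : HasLapAt F t a) :
    lap F t = a := by
  obtain ⟨G, hG, L1, LI, h1, hI, hs⟩ := h
  have e1 : (fun z => fderiv ℝ F z 1) =ᶠ[nhds t] (fun z => G z 1) :=
    hG.mono fun z hz => by simp only [hz.fderiv]
  have eI : (fun z => fderiv ℝ F z Complex.I) =ᶠ[nhds t] (fun z => G z Complex.I) :=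
    hG.mono fun z hz => by simp only [hz.fderiv]
  rw [lap, e1.fderiv_eq, eI.fderiv_eq, h1.fderiv, hI.fderiv, hs]

theorem HasLapAt.add {F G : ℂ → ℝ} {t : ℂ} {a b : ℝ}
    (hF : HasLapAt F t a) (hG : HasLapAt G t b) : HasLapAt (fun z => F z + G z) t (a + b) := by
  obtain ⟨P, hP, L1, LI, h1, hI, hs⟩ := hF
  obtain ⟨Q, hQ, M1, MI, k1, kI, ks⟩ := hG
  refine ⟨fun z => P z + Q z, ?_, L1 + M1, LI + MI, ?_, ?_, ?_⟩
  · filter_upwards [hP, hQ] with z h h' using h.add h'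
  · exact h1.add k1
  · exact hI.add kI
  · simp only [ContinuousLinearMap.add_apply]; linarith

theorem HasLapAt.const_mul {F : ℂ → ℝ} {t : ℂ} {a : ℝ} (r : ℝ)
    (hF : HasLapAt F t a) : HasLapAt (fun z => r * F z) t (r * a) := by
  obtain ⟨P, hP, L1, LI, h1, hI, hs⟩ := hF
  refine ⟨fun z => r • P z, ?_, r • L1, r • LI, ?_, ?_, ?_⟩
  · filter_upwards [hP] with z h using h.const_smul r
  · simpa [smul_eq_mul] using h1.const_mul r
  · simpa [smul_eq_mul] using hI.const_mul r
  · simp only [ContinuousLinearMap.smul_apply, smul_eq_mul]; rw [← hs]; ring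

theorem hasLapAt_const (t : ℂ) (r : ℝ) : HasLapAt (fun _ => r) t 0 := by
  refine ⟨fun _ => 0, Filter.Eventually.of_forall fun z => hasFDerivAt_const r z, 0, 0, ?_, ?_, by simp⟩
  · simpa using hasFDerivAt_const (0:ℝ) t
  · simpa using hasFDerivAt_const (0:ℝ) t

theorem lap_congr {F G : ℂ → ℝ} {t : ℂ} (h : F =ᶠ[nhds t] G) : lap F t = lap G t := by
  have e1 : (fun z => fderiv ℝ F z 1) =ᶠ[nhds t] (fun z => fderiv ℝ G z 1) :=
    (h.fderiv (𝕜 := ℝ)).mono fun z hz => by simp only [hz]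
  have eI : (fun z => fderiv ℝ F z Complex.I) =ᶠ[nhds t] (fun z => fderiv ℝ G z Complex.I) :=
    (h.fderiv (𝕜 := ℝ)).mono fun z hz => by simp only [hz]
  rw [lap, lap, e1.fderiv_eq, eI.fderiv_eq]

noncomputable def Gmap (f : ℂ → ℂ) (c : ℝ) (z : ℂ) : ℂ →L[ℝ] ℝ :=
  ((Complex.normSq (f z) + c)⁻¹ * 2) •
    (Complex.reCLM.comp (ContinuousLinearMap.mul ℝ ℂ ((starRingEnd ℂ) (f z) * deriv f z)))

@[simp] theorem Gmap_apply (f : ℂ → ℂ) (c : ℝ) (z v : ℂ) :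
    Gmap f c z v = (Complex.normSq (f z) + c)⁻¹ * 2 *
      ((starRingEnd ℂ) (f z) * deriv f z * v).re := by
  simp [Gmap, ContinuousLinearMap.mul_apply']

theorem hasFDerivAt_mulCLM {f : ℂ → ℂ} {b z : ℂ} (h : HasDerivAt f b z) :
    HasFDerivAt f (ContinuousLinearMap.mul ℝ ℂ b) z := by
  have := h.hasFDerivAt.restrictScalars ℝ
  refine this.congr_fderiv ?_
  ext v
  simp [ContinuousLinearMap.mul_apply', mul_comm]

theorem hasFDerivAt_normSq_comp {f : ℂ → ℂ} {z : ℂ} (c : ℝ) (h : HasDerivAt f (deriv f z) z) :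
    HasFDerivAt (fun w => Complex.normSq (f w) + c)
      ((2:ℝ) • (Complex.reCLM.comp
        (ContinuousLinearMap.mul ℝ ℂ ((starRingEnd ℂ) (f z) * deriv f z)))) z := by
  have hF := hasFDerivAt_mulCLM h
  have h1 : HasFDerivAt (fun w => (f w).re)
      (Complex.reCLM.comp (ContinuousLinearMap.mul ℝ ℂ (deriv f z))) z :=
    (Complex.reCLM.hasFDerivAt).comp z hF
  have h2 : HasFDerivAt (fun w => (f w).im)
      (Complex.imCLM.comp (ContinuousLinearMap.mul ℝ ℂ (deriv f z))) z :=
    (Complex.imCLM.hasFDerivAt).comp z hF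
  have h3 := (h1.mul h1).add ((h2.mul h2).add_const c)
  have hfun : (fun w => Complex.normSq (f w) + c)
      = (fun w => (f w).re * (f w).re + ((f w).im * (f w).im + c)) := by
    funext w; rw [Complex.normSq_apply]; ring
  rw [hfun]
  refine h3.congr_fderiv ?_
  ext v
  simp [ContinuousLinearMap.mul_apply', Complex.mul_re, Complex.mul_im]
  ring

theorem key_fderiv {f : ℂ → ℂ} {U : Set ℂ} (hU : IsOpen U) (hf : DifferentiableOn ℂ f U)
    (c : ℝ) (hpos : ∀ z ∈ U, 0 < Complex.normSq (f z) + c) {z : ℂ} (hz : z ∈ U) :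
    HasFDerivAt (fun w => Real.log (Complex.normSq (f w) + c)) (Gmap f c z) z := by
  have hd : HasDerivAt f (deriv f z) z :=
    (hf.differentiableAt (hU.mem_nhds hz)).hasDerivAt
  have hN := hasFDerivAt_normSq_comp c hd
  have hlog := (Real.hasDerivAt_log (hpos z hz).ne').comp_hasFDerivAt z hN
  refine hlog.congr_fderiv ?_
  rw [Gmap, smul_smul]

theorem key {f : ℂ → ℂ} {U : Set ℂ} (hU : IsOpen U) (hf : DifferentiableOn ℂ f U)
    (hf' : DifferentiableOn ℂ (deriv f) U) (c : ℝ)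
    (hpos : ∀ z ∈ U, 0 < Complex.normSq (f z) + c) {t : ℂ} (ht : t ∈ U) :
    HasLapAt (fun z => Real.log (Complex.normSq (f z) + c)) t
      (4 * c * Complex.normSq (deriv f t) / (Complex.normSq (f t) + c) ^ 2) := by
  have hd : HasDerivAt f (deriv f t) t := (hf.differentiableAt (hU.mem_nhds ht)).hasDerivAt
  have hd2 : HasDerivAt (deriv f) (deriv (deriv f) t) t :=
    (hf'.differentiableAt (hU.mem_nhds ht)).hasDerivAt
  have hF := hasFDerivAt_mulCLM hd
  have hF2 := hasFDerivAt_mulCLM hd2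
  have hp : HasFDerivAt (fun z => (f z).re)
      (Complex.reCLM.comp (ContinuousLinearMap.mul ℝ ℂ (deriv f t))) t :=
    (Complex.reCLM.hasFDerivAt).comp t hF
  have hq : HasFDerivAt (fun z => (f z).im)
      (Complex.imCLM.comp (ContinuousLinearMap.mul ℝ ℂ (deriv f t))) t :=
    (Complex.imCLM.hasFDerivAt).comp t hF
  have hr : HasFDerivAt (fun z => (deriv f z).re)
      (Complex.reCLM.comp (ContinuousLinearMap.mul ℝ ℂ (deriv (deriv f) t))) t :=
    (Complex.reCLM.hasFDerivAt).comp t hF2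
  have hs2 : HasFDerivAt (fun z => (deriv f z).im)
      (Complex.imCLM.comp (ContinuousLinearMap.mul ℝ ℂ (deriv (deriv f) t))) t :=
    (Complex.imCLM.hasFDerivAt).comp t hF2
  have hNne : Complex.normSq (f t) + c ≠ 0 := (hpos t ht).ne'
  have hN := hasFDerivAt_normSq_comp c hd
  have hNinv2 := ((hasDerivAt_inv hNne).comp_hasFDerivAt t hN).mul_const (2:ℝ)
  have u1fun : (fun z => Gmap f c z 1) = fun z => ((Complex.normSq (f z) + c)⁻¹ * 2) *
      ((f z).re * (deriv f z).re + (f z).im * (deriv f z).im) := by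
    funext z
    simp only [Gmap_apply, mul_one, Complex.mul_re, Complex.conj_re, Complex.conj_im]
    ring
  have uIfun : (fun z => Gmap f c z Complex.I) = fun z => ((Complex.normSq (f z) + c)⁻¹ * 2) *
      ((f z).im * (deriv f z).re - (f z).re * (deriv f z).im) := by
    funext z
    simp only [Gmap_apply, Complex.mul_re, Complex.mul_im, Complex.conj_re, Complex.conj_im,
      Complex.I_re, Complex.I_im]
    ring
  have hL1 := hNinv2.mul ((hp.mul hr).add (hq.mul hs2))
  have hLI := hNinv2.mul ((hq.mul hr).sub (hp.mul hs2))
  simp only [Function.comp_def, Pi.mul_def, Pi.add_def, Pi.sub_def] at hL1 hLI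
  rw [← u1fun] at hL1
  rw [← uIfun] at hLI
  refine ⟨Gmap f c, ?_, _, _, hL1, hLI, ?_⟩
  · filter_upwards [hU.mem_nhds ht] with z hz using key_fderiv hU hf c hpos hz
  · simp only [ContinuousLinearMap.add_apply, ContinuousLinearMap.smul_apply,
      ContinuousLinearMap.comp_apply, ContinuousLinearMap.mul_apply',
      Complex.reCLM_apply, Complex.imCLM_apply, smul_eq_mul, ContinuousLinearMap.sub_apply,
      ContinuousLinearMap.neg_apply, mul_one, Complex.mul_re, Complex.mul_im,
      Complex.one_re, Complex.one_im, Complex.I_re, Complex.I_im, Complex.conj_re, Complex.conj_im]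
    field_simp
    simp only [Complex.normSq_apply]
    ring

theorem log_expand31 (x y u v : ℝ) (hx : 0 < x) (hy : 0 < y) (hu : 0 < u) (hv : 0 < v) :
    Real.log (16 * x ^ 3 * y / (u ^ 3 * v)) = Real.log 16 +
      (3 * Real.log x + (Real.log y + ((-3) * Real.log u + (-1) * Real.log v))) := by
  have h16 : (16:ℝ) ≠ 0 := by norm_num
  have hx3 : x ^ 3 ≠ 0 := pow_ne_zero 3 hx.ne'
  have hv3 : v ^ 3 ≠ 0 := pow_ne_zero 3 hv.ne'
  have hu3 : u ^ 3 ≠ 0 := pow_ne_zero 3 hu.ne'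
  rw [Real.log_div (mul_ne_zero (mul_ne_zero h16 hx3) hy.ne') (mul_ne_zero hu3 hv.ne'),
    Real.log_mul (mul_ne_zero h16 hx3) hy.ne', Real.log_mul h16 hx3,
    Real.log_mul hu3 hv.ne', Real.log_pow, Real.log_pow]
  push_cast; ring

theorem log_expand13 (x y u v : ℝ) (hx : 0 < x) (hy : 0 < y) (hu : 0 < u) (hv : 0 < v) :
    Real.log (16 * x * y ^ 3 / (u * v ^ 3)) = Real.log 16 +
      (Real.log x + (3 * Real.log y + ((-1) * Real.log u + (-3) * Real.log v))) := by
  have h16 : (16:ℝ) ≠ 0 := by norm_num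
  have hy3 : y ^ 3 ≠ 0 := pow_ne_zero 3 hy.ne'
  have hv3 : v ^ 3 ≠ 0 := pow_ne_zero 3 hv.ne'
  rw [Real.log_div (mul_ne_zero (mul_ne_zero h16 hx.ne') hy3) (mul_ne_zero hu.ne' hv3),
    Real.log_mul (mul_ne_zero h16 hx.ne') hy3, Real.log_mul h16 hx.ne',
    Real.log_mul hu.ne' hv3, Real.log_pow, Real.log_pow]
  push_cast; ring

theorem normSq_eq_norm_sq' (z : ℂ) : Complex.normSq z = ‖z‖ ^ 2 := by
  rw [Complex.sq_norm]

theorem log_normSq (z : ℂ) : Real.log (Complex.normSq z) = 2 * Real.log ‖z‖ := by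
  rw [normSq_eq_norm_sq' z, Real.log_pow]
  push_cast; ring

/-- STATEMENT 18: for holomorphic `g₁, g₂` with nonvanishing derivatives on the open
set `D ⊆ ℂ`, the functions `K, κ` given by the canonical Weierstrass representation
satisfy `K < 0`, `K² - κ² > 0`, and the system of natural PDE's of minimal surfaces
of general type in `ℝ⁴`:
`(K² - κ²)^{1/4} Δ ln|κ - K| = 2(2K - κ)` and `(K² - κ²)^{1/4} Δ ln|κ + K| = 2(2K + κ)`. -/
theorem stmt18 (D : Set ℂ) (hD : IsOpen D) (g₁ g₂ : ℂ → ℂ)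
    (hg₁ : DifferentiableOn ℂ g₁ D) (hg₂ : DifferentiableOn ℂ g₂ D)
    (hg₁' : ∀ t ∈ D, deriv g₁ t ≠ 0) (hg₂' : ∀ t ∈ D, deriv g₂ t ≠ 0)
    (K κ : ℂ → ℝ)
    (hK : ∀ t, K t = (-8 * ‖deriv g₁ t * deriv g₂ t‖ /
        ((‖g₁ t‖ ^ 2 + 1) * (‖g₂ t‖ ^ 2 + 1))) *
      (‖deriv g₁ t‖ ^ 2 / (‖g₁ t‖ ^ 2 + 1) ^ 2 +
       ‖deriv g₂ t‖ ^ 2 / (‖g₂ t‖ ^ 2 + 1) ^ 2))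
    (hκ : ∀ t, κ t = (8 * ‖deriv g₁ t * deriv g₂ t‖ /
        ((‖g₁ t‖ ^ 2 + 1) * (‖g₂ t‖ ^ 2 + 1))) *
      (‖deriv g₁ t‖ ^ 2 / (‖g₁ t‖ ^ 2 + 1) ^ 2 -
       ‖deriv g₂ t‖ ^ 2 / (‖g₂ t‖ ^ 2 + 1) ^ 2)) :
    ∀ t ∈ D,
      K t < 0 ∧ 0 < K t ^ 2 - κ t ^ 2 ∧
      (K t ^ 2 - κ t ^ 2) ^ ((1 : ℝ) / 4) *
        lap (fun z => Real.log |κ z - K z|) t = 2 * (2 * K t - κ t) ∧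
      (K t ^ 2 - κ t ^ 2) ^ ((1 : ℝ) / 4) *
        lap (fun z => Real.log |κ z + K z|) t = 2 * (2 * K t + κ t) := by
  intro t ht
  have hr1 : 0 < ‖deriv g₁ t‖ := norm_pos_iff.mpr (hg₁' t ht)
  have hr2 : 0 < ‖deriv g₂ t‖ := norm_pos_iff.mpr (hg₂' t ht)
  have hs1 : (0:ℝ) < ‖g₁ t‖ ^ 2 + 1 := by positivity
  have hs2 : (0:ℝ) < ‖g₂ t‖ ^ 2 + 1 := by positivity
  have hKt := hK t
  have hκt := hκ t
  rw [norm_mul] at hKt hκt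
  -- first claim
  have hKneg : K t < 0 := by
    rw [hKt]
    apply mul_neg_of_neg_of_pos
    · apply div_neg_of_neg_of_pos
      · nlinarith
      · positivity
    · have p1 : 0 < ‖deriv g₁ t‖ ^ 2 / (‖g₁ t‖ ^ 2 + 1) ^ 2 := by positivity
      have p2 : 0 < ‖deriv g₂ t‖ ^ 2 / (‖g₂ t‖ ^ 2 + 1) ^ 2 := by positivity
      linarith
  -- the quantity x = (K²-κ²)^{1/4}
  have hdiff : K t ^ 2 - κ t ^ 2 =
      (4 * (‖deriv g₁ t‖ * ‖deriv g₂ t‖) / ((‖g₁ t‖ ^ 2 + 1) * (‖g₂ t‖ ^ 2 + 1))) ^ 4 := by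
    rw [hKt, hκt]
    field_simp
    ring
  have hx : 0 < 4 * (‖deriv g₁ t‖ * ‖deriv g₂ t‖) / ((‖g₁ t‖ ^ 2 + 1) * (‖g₂ t‖ ^ 2 + 1)) := by
    positivity
  have hpos2 : 0 < K t ^ 2 - κ t ^ 2 := by rw [hdiff]; positivity
  have hroot : (K t ^ 2 - κ t ^ 2) ^ ((1:ℝ)/4) =
      4 * (‖deriv g₁ t‖ * ‖deriv g₂ t‖) / ((‖g₁ t‖ ^ 2 + 1) * (‖g₂ t‖ ^ 2 + 1)) := by
    rw [hdiff, show ((1:ℝ)/4) = (((4:ℕ):ℝ))⁻¹ by norm_num]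
    exact Real.pow_rpow_inv_natCast hx.le (by norm_num)
  -- differentiability of derivatives
  have ha1 : AnalyticOnNhd ℂ g₁ D := hg₁.analyticOnNhd hD
  have ha2 : AnalyticOnNhd ℂ g₂ D := hg₂.analyticOnNhd hD
  have hg1d : DifferentiableOn ℂ (deriv g₁) D := ha1.deriv.differentiableOn
  have hg2d : DifferentiableOn ℂ (deriv g₂) D := ha2.deriv.differentiableOn
  have hg1dd : DifferentiableOn ℂ (deriv (deriv g₁)) D := ha1.deriv.deriv.differentiableOn
  have hg2dd : DifferentiableOn ℂ (deriv (deriv g₂)) D := ha2.deriv.deriv.differentiableOn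
  -- HasLapAt building blocks
  have hQ1 := key hD hg₁ hg1d 1
    (fun z _ => by have := Complex.normSq_nonneg (g₁ z); linarith) ht
  have hQ2 := key hD hg₂ hg2d 1
    (fun z _ => by have := Complex.normSq_nonneg (g₂ z); linarith) ht
  have hP1 := key hD hg1d hg1dd 0
    (fun z hz => by simpa using Complex.normSq_pos.mpr (hg₁' z hz)) ht
  have hP2 := key hD hg2d hg2dd 0
    (fun z hz => by simpa using Complex.normSq_pos.mpr (hg₂' z hz)) ht
  simp only [add_zero, mul_zero, zero_mul, zero_div] at hP1 hP2
  have hcomb : ∀ c1 c2 c3 c4 : ℝ, HasLapAt (fun z => Real.log 16 +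
      (c1 * Real.log (Complex.normSq (deriv g₁ z)) +
      (c2 * Real.log (Complex.normSq (deriv g₂ z)) +
      (c3 * Real.log (Complex.normSq (g₁ z) + 1) +
       c4 * Real.log (Complex.normSq (g₂ z) + 1))))) t
      (0 + (c1 * 0 + (c2 * 0 +
        (c3 * (4 * 1 * Complex.normSq (deriv g₁ t) / (Complex.normSq (g₁ t) + 1) ^ 2) +
         c4 * (4 * 1 * Complex.normSq (deriv g₂ t) / (Complex.normSq (g₂ t) + 1) ^ 2))))) :=
    fun c1 c2 c3 c4 => (hasLapAt_const t _).add ((hP1.const_mul c1).add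
      ((hP2.const_mul c2).add ((hQ1.const_mul c3).add (hQ2.const_mul c4))))
  -- conversions at t
  have n1 : Complex.normSq (deriv g₁ t) = ‖deriv g₁ t‖ ^ 2 := normSq_eq_norm_sq' _
  have n2 : Complex.normSq (deriv g₂ t) = ‖deriv g₂ t‖ ^ 2 := normSq_eq_norm_sq' _
  have m1 : Complex.normSq (g₁ t) + 1 = ‖g₁ t‖ ^ 2 + 1 := by rw [normSq_eq_norm_sq']
  have m2 : Complex.normSq (g₂ t) + 1 = ‖g₂ t‖ ^ 2 + 1 := by rw [normSq_eq_norm_sq']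
  -- minus case
  have hem : (fun z => Real.log |κ z - K z|) =ᶠ[nhds t] (fun z => Real.log 16 +
      ((3/2) * Real.log (Complex.normSq (deriv g₁ z)) +
      ((1/2) * Real.log (Complex.normSq (deriv g₂ z)) +
      ((-3) * Real.log (Complex.normSq (g₁ z) + 1) +
       (-1) * Real.log (Complex.normSq (g₂ z) + 1))))) := by
    filter_upwards [hD.mem_nhds ht] with z hz
    have a1 : 0 < ‖deriv g₁ z‖ := norm_pos_iff.mpr (hg₁' z hz)
    have a2 : 0 < ‖deriv g₂ z‖ := norm_pos_iff.mpr (hg₂' z hz)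
    have b1 : (0:ℝ) < ‖g₁ z‖ ^ 2 + 1 := by positivity
    have b2 : (0:ℝ) < ‖g₂ z‖ ^ 2 + 1 := by positivity
    have hKz := hK z
    have hκz := hκ z
    rw [norm_mul] at hKz hκz
    have hsub : κ z - K z = 16 * ‖deriv g₁ z‖ ^ 3 * ‖deriv g₂ z‖ /
        ((‖g₁ z‖ ^ 2 + 1) ^ 3 * (‖g₂ z‖ ^ 2 + 1)) := by
      rw [hKz, hκz]; field_simp; ring
    have hposz : 0 < 16 * ‖deriv g₁ z‖ ^ 3 * ‖deriv g₂ z‖ /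
        ((‖g₁ z‖ ^ 2 + 1) ^ 3 * (‖g₂ z‖ ^ 2 + 1)) := by positivity
    rw [hsub, abs_of_pos hposz, log_expand31 _ _ _ _ a1 a2 b1 b2,
      log_normSq (deriv g₁ z), log_normSq (deriv g₂ z),
      normSq_eq_norm_sq' (g₁ z), normSq_eq_norm_sq' (g₂ z)]
    ring
  have lm : lap (fun z => Real.log |κ z - K z|) t =
      0 + ((3/2) * 0 + ((1/2) * 0 +
        ((-3) * (4 * 1 * Complex.normSq (deriv g₁ t) / (Complex.normSq (g₁ t) + 1) ^ 2) +
         (-1) * (4 * 1 * Complex.normSq (deriv g₂ t) / (Complex.normSq (g₂ t) + 1) ^ 2)))) :=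
    (lap_congr hem).trans (hcomb (3/2) (1/2) (-3) (-1)).lap_eq
  -- plus case
  have hep : (fun z => Real.log |κ z + K z|) =ᶠ[nhds t] (fun z => Real.log 16 +
      ((1/2) * Real.log (Complex.normSq (deriv g₁ z)) +
      ((3/2) * Real.log (Complex.normSq (deriv g₂ z)) +
      ((-1) * Real.log (Complex.normSq (g₁ z) + 1) +
       (-3) * Real.log (Complex.normSq (g₂ z) + 1))))) := by
    filter_upwards [hD.mem_nhds ht] with z hz
    have a1 : 0 < ‖deriv g₁ z‖ := norm_pos_iff.mpr (hg₁' z hz)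
    have a2 : 0 < ‖deriv g₂ z‖ := norm_pos_iff.mpr (hg₂' z hz)
    have b1 : (0:ℝ) < ‖g₁ z‖ ^ 2 + 1 := by positivity
    have b2 : (0:ℝ) < ‖g₂ z‖ ^ 2 + 1 := by positivity
    have hKz := hK z
    have hκz := hκ z
    rw [norm_mul] at hKz hκz
    have hsum : κ z + K z = -(16 * ‖deriv g₁ z‖ * ‖deriv g₂ z‖ ^ 3 /
        ((‖g₁ z‖ ^ 2 + 1) * (‖g₂ z‖ ^ 2 + 1) ^ 3)) := by
      rw [hKz, hκz]; field_simp; ring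
    have hposz : 0 < 16 * ‖deriv g₁ z‖ * ‖deriv g₂ z‖ ^ 3 /
        ((‖g₁ z‖ ^ 2 + 1) * (‖g₂ z‖ ^ 2 + 1) ^ 3) := by positivity
    rw [hsum, abs_neg, abs_of_pos hposz, log_expand13 _ _ _ _ a1 a2 b1 b2,
      log_normSq (deriv g₁ z), log_normSq (deriv g₂ z),
      normSq_eq_norm_sq' (g₁ z), normSq_eq_norm_sq' (g₂ z)]
    ring
  have lp : lap (fun z => Real.log |κ z + K z|) t =
      0 + ((1/2) * 0 + ((3/2) * 0 +
        ((-1) * (4 * 1 * Complex.normSq (deriv g₁ t) / (Complex.normSq (g₁ t) + 1) ^ 2) +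
         (-3) * (4 * 1 * Complex.normSq (deriv g₂ t) / (Complex.normSq (g₂ t) + 1) ^ 2)))) :=
    (lap_congr hep).trans (hcomb (1/2) (3/2) (-1) (-3)).lap_eq
  refine ⟨hKneg, hpos2, ?_, ?_⟩
  · rw [hroot, lm, n1, n2, m1, m2, hKt, hκt]
    ring
  · rw [hroot, lp, n1, n2, m1, m2, hKt, hκt]
    ring
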